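/- Let H be a complex Hilbert space. For each n ∈ ℕ let S⁽ⁿ⁾ and S be degenerate semigroups on H consisting of self-adjoint contractions, with resolvents Rₙ(λ)f = ∫₀^∞ e^{−λt} S⁽ⁿ⁾_t f dt and R(λ)f = ∫₀^∞ e^{−λt} S_t f dt for Re λ > 0. Let λ ∈ ℂ ∖ ℝ with Re λ > 0 and suppose Rₙ(λ) → R(λ) in the weak operator topology. Then for every f ∈ H one has lim_{n→∞} ‖Rₙ(λ) f‖ = ‖R(λ) f‖, and consequently Rₙ(λ) → R(λ) in the strong operator topology. (Key identities: Rₙ(λ)* = Rₙ(λ̄) and Rₙ(λ̄) Rₙ(λ) = (λ − λ̄)^{−1} (Rₙ(λ̄) − Rₙ(λ)), and likewise for R.) -/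

import Mathlib

open MeasureTheory Filter Topology

/-!
STATEMENT 12: For degenerate semigroups of self-adjoint contractions on a
Hilbert space, weak operator convergence of the resolvents at a single
non-real `λ` with `Re λ > 0` implies convergence of the norms
`‖Rₙ(λ)f‖ → ‖R(λ)f‖` and hence strong operator convergence at `λ`.
-/

noncomputable section
namespace ResolventAux12
open Set


local notation "⟪" x ", " y "⟫" => @inner ℂ _ _ x y

variable {H : Type*} [NormedAddCommGroup H] [InnerProductSpace ℂ H] [CompleteSpace H]

lemma norm_exp_neg (lam : ℂ) (t : ℝ) :
    ‖Complex.exp (-(lam * t))‖ = Real.exp (-(lam.re * t)) := by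
  rw [Complex.norm_exp]
  congr 1
  simp [Complex.mul_re]

lemma cont_exp_neg (lam : ℂ) : Continuous fun t : ℝ => Complex.exp (-(lam * t)) := by
  continuity

lemma integrableOn_exp_smul {E : Type*} [NormedAddCommGroup E] [NormedSpace ℂ E]
    {g : ℝ → E} (hg : ContinuousOn g (Ioi 0))
    {C : ℝ} (hC : ∀ s ∈ Ioi (0:ℝ), ‖g s‖ ≤ C) {lam : ℂ} (hre : 0 < lam.re) :
    IntegrableOn (fun s : ℝ => Complex.exp (-(lam * s)) • g s) (Ioi 0) := by
  have hmeas : AEStronglyMeasurable (fun s : ℝ => Complex.exp (-(lam * s)) • g s)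
      (volume.restrict (Ioi 0)) :=
    (((cont_exp_neg lam).continuousOn).smul hg).aestronglyMeasurable measurableSet_Ioi
  refine Integrable.mono' (((exp_neg_integrableOn_Ioi 0 hre)).const_mul C) hmeas ?_
  filter_upwards [ae_restrict_mem measurableSet_Ioi] with s hs
  rw [norm_smul, norm_exp_neg]
  have h1 : ‖g s‖ ≤ C := hC s hs
  have h2 : (0:ℝ) < Real.exp (-(lam.re * s)) := Real.exp_pos _
  calc Real.exp (-(lam.re * s)) * ‖g s‖ ≤ Real.exp (-(lam.re * s)) * C :=
        mul_le_mul_of_nonneg_left h1 h2.le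
    _ = C * Real.exp (-lam.re * s) := by rw [neg_mul]; ring

lemma integrableOn_exp_mul {ψ : ℝ → ℂ} (hm : AEStronglyMeasurable ψ (volume.restrict (Ioi 0)))
    {C : ℝ} (hC : ∀ u ∈ Ioi (0:ℝ), ‖ψ u‖ ≤ C) {lam : ℂ} (hre : 0 < lam.re) :
    IntegrableOn (fun u : ℝ => Complex.exp (-(lam * u)) * ψ u) (Ioi 0) := by
  have hmeas : AEStronglyMeasurable (fun u : ℝ => Complex.exp (-(lam * u)) * ψ u)
      (volume.restrict (Ioi 0)) :=
    ((cont_exp_neg lam).aestronglyMeasurable.restrict).mul hm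
  refine Integrable.mono' (((exp_neg_integrableOn_Ioi 0 hre)).const_mul C) hmeas ?_
  filter_upwards [ae_restrict_mem measurableSet_Ioi] with s hs
  rw [norm_mul, norm_exp_neg]
  have h1 : ‖ψ s‖ ≤ C := hC s hs
  have h2 : (0:ℝ) < Real.exp (-(lam.re * s)) := Real.exp_pos _
  calc Real.exp (-(lam.re * s)) * ‖ψ s‖ ≤ Real.exp (-(lam.re * s)) * C :=
        mul_le_mul_of_nonneg_left h1 h2.le
    _ = C * Real.exp (-lam.re * s) := by rw [neg_mul]; ring

lemma double_exp_integral {ψ : ℝ → ℂ} (hψc : ContinuousOn ψ (Ioi 0))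
    {C : ℝ} (hC : ∀ u ∈ Ioi (0:ℝ), ‖ψ u‖ ≤ C)
    {a b : ℂ} (ha : 0 < a.re) (hb : 0 < b.re) (hab : a ≠ b) :
    (∫ t in Ioi (0:ℝ), Complex.exp (-(a * t)) *
        ∫ s in Ioi (0:ℝ), Complex.exp (-(b * s)) * ψ (s + t))
      = (a - b)⁻¹ * ((∫ u in Ioi (0:ℝ), Complex.exp (-(b * u)) * ψ u)
          - ∫ u in Ioi (0:ℝ), Complex.exp (-(a * u)) * ψ u) := by
  classical
  set Ψ : ℝ → ℂ := (Ioi (0:ℝ)).indicator ψ with hΨdef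
  have hΨm : AEStronglyMeasurable Ψ volume :=
    (aestronglyMeasurable_indicator_iff measurableSet_Ioi).2
      (hψc.aestronglyMeasurable measurableSet_Ioi)
  have hΨbd : ∀ u, ‖Ψ u‖ ≤ max C 0 := by
    intro u
    by_cases hu : u ∈ Ioi (0:ℝ)
    · rw [hΨdef, indicator_of_mem hu]
      exact le_max_of_le_left (hC u hu)
    · rw [hΨdef, indicator_of_notMem hu]
      simp
  -- Step 1 : translation in the inner integral
  have step1 : ∀ t ∈ Ioi (0:ℝ),
      (∫ s in Ioi (0:ℝ), Complex.exp (-(b * s)) * ψ (s + t))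
        = ∫ u in Ioi t, Complex.exp (b * t) * (Complex.exp (-(b * u)) * Ψ u) := by
    intro t ht
    have himg : (fun s : ℝ => s + t) '' Ioi (0:ℝ) = Ioi t := by
      rw [image_add_const_Ioi, zero_add]
    rw [← himg, (measurePreserving_add_right volume t).setIntegral_image_emb
      (measurableEmbedding_addRight t)]
    refine setIntegral_congr_fun measurableSet_Ioi fun s hs => ?_
    have hst : s + t ∈ Ioi (0:ℝ) := mem_Ioi.2 (add_pos hs ht)
    rw [hΨdef, indicator_of_mem hst, ← mul_assoc, ← Complex.exp_add]
    congr 2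
    push_cast
    ring
  -- Step 2 : rewrite as a double integral over the plane
  set D : Set (ℝ × ℝ) := {p | 0 < p.1 ∧ p.1 < p.2} with hDdef
  have hDopen : IsOpen D := by
    have h1 : IsOpen {p : ℝ × ℝ | 0 < p.1} := isOpen_lt continuous_const continuous_fst
    have h2 : IsOpen {p : ℝ × ℝ | p.1 < p.2} := isOpen_lt continuous_fst continuous_snd
    exact h1.inter h2
  have hDmeas : MeasurableSet D := hDopen.measurableSet
  set G : ℝ × ℝ → ℂ := D.indicator
    (fun p => Complex.exp ((b - a) * p.1) * (Complex.exp (-(b * p.2)) * Ψ p.2)) with hGdef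
  have lhs_eq : (∫ t in Ioi (0:ℝ), Complex.exp (-(a * t)) *
      ∫ s in Ioi (0:ℝ), Complex.exp (-(b * s)) * ψ (s + t)) = ∫ t : ℝ, ∫ u : ℝ, G (t, u) := by
    rw [← integral_indicator measurableSet_Ioi]
    refine integral_congr_ae (Eventually.of_forall fun t => ?_)
    beta_reduce
    by_cases ht : t ∈ Ioi (0:ℝ)
    · rw [indicator_of_mem ht, step1 t ht, ← integral_indicator measurableSet_Ioi,
        ← integral_const_mul]
      refine integral_congr_ae (Eventually.of_forall fun u => ?_)
      beta_reduce
      by_cases hu : u ∈ Ioi t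
      · rw [indicator_of_mem hu, hGdef, indicator_of_mem (show (t,u) ∈ D from ⟨ht, hu⟩),
          ← mul_assoc, ← Complex.exp_add]
        congr 2
        ring
      · rw [indicator_of_notMem hu, mul_zero, hGdef,
          indicator_of_notMem (fun h => hu h.2)]
    · rw [indicator_of_notMem ht]
      have : ∀ u : ℝ, G (t, u) = 0 := fun u =>
        indicator_of_notMem (fun h => ht h.1) _
      simp [this]
  -- Integrability of G on the product
  obtain ⟨ε, hε0, hεa, hεb⟩ : ∃ ε : ℝ, 0 < ε ∧ 2 * ε ≤ a.re ∧ 2 * ε ≤ b.re := by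
    refine ⟨min a.re b.re / 2, by positivity, ?_, ?_⟩
    · nlinarith [min_le_left a.re b.re]
    · nlinarith [min_le_right a.re b.re]
  have hGint : Integrable G (volume.prod volume) := by
    have hmeasG : AEStronglyMeasurable G (volume.prod volume) := by
      refine AEStronglyMeasurable.indicator ?_ hDmeas
      have h1 : Continuous fun p : ℝ × ℝ => Complex.exp ((b - a) * p.1) :=
        Complex.continuous_exp.comp
          (continuous_const.mul (Complex.continuous_ofReal.comp continuous_fst))
      have h2 : Continuous fun p : ℝ × ℝ => Complex.exp (-(b * p.2)) :=
        Complex.continuous_exp.comp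
          (continuous_const.mul (Complex.continuous_ofReal.comp continuous_snd)).neg
      exact h1.aestronglyMeasurable.mul (h2.aestronglyMeasurable.mul (hΨm.comp_quasiMeasurePreserving MeasureTheory.Measure.quasiMeasurePreserving_snd))
    set g1 : ℝ → ℝ := (Ioi (0:ℝ)).indicator (fun t => (max C 0) * Real.exp (-ε * t)) with hg1
    set g2 : ℝ → ℝ := (Ioi (0:ℝ)).indicator (fun u => Real.exp (-ε * u)) with hg2
    have h1 : Integrable g1 volume := by
      rw [hg1, integrable_indicator_iff measurableSet_Ioi]
      exact (exp_neg_integrableOn_Ioi 0 hε0).const_mul _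
    have h2 : Integrable g2 volume := by
      rw [hg2, integrable_indicator_iff measurableSet_Ioi]
      exact exp_neg_integrableOn_Ioi 0 hε0
    refine Integrable.mono' (h1.mul_prod h2) hmeasG (Eventually.of_forall fun p => ?_)
    by_cases hp : p ∈ D
    · have hp' := hp
      obtain ⟨hp1, hp2⟩ := hp'
      have hu0 : (0:ℝ) < p.2 := hp1.trans hp2
      rw [hGdef, indicator_of_mem hp, hg1, hg2,
        indicator_of_mem (show p.1 ∈ Ioi (0:ℝ) from hp1),
        indicator_of_mem (show p.2 ∈ Ioi (0:ℝ) from hu0)]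
      have e1 : ‖Complex.exp ((b - a) * p.1)‖ = Real.exp ((b.re - a.re) * p.1) := by
        rw [Complex.norm_exp]
        congr 1
        simp [Complex.mul_re]
      have e2 : ‖Complex.exp (-(b * p.2))‖ = Real.exp (-(b.re * p.2)) := norm_exp_neg b p.2
      rw [norm_mul, norm_mul, e1, e2]
      have key : Real.exp ((b.re - a.re) * p.1) * Real.exp (-(b.re * p.2))
          ≤ Real.exp (-ε * p.1) * Real.exp (-ε * p.2) := by
        rw [← Real.exp_add, ← Real.exp_add]
        apply Real.exp_le_exp.2
        have k1 : (b.re - a.re + ε) * p.1 ≤ (b.re - ε) * p.1 :=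
          mul_le_mul_of_nonneg_right (by linarith) hp1.le
        have k2 : (b.re - ε) * p.1 ≤ (b.re - ε) * p.2 :=
          mul_le_mul_of_nonneg_left hp2.le (by linarith)
        nlinarith [k1, k2]
      rw [← mul_assoc]
      calc Real.exp ((b.re - a.re) * p.1) * Real.exp (-(b.re * p.2)) * ‖Ψ p.2‖
          ≤ (Real.exp (-ε * p.1) * Real.exp (-ε * p.2)) * (max C 0) :=
            mul_le_mul key (hΨbd p.2) (norm_nonneg _) (by positivity)
        _ = max C 0 * Real.exp (-ε * p.1) * Real.exp (-ε * p.2) := by ring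
    · rw [hGdef, indicator_of_notMem hp, norm_zero]
      exact mul_nonneg (indicator_nonneg (fun x _ => by positivity) _)
        (indicator_nonneg (fun x _ => by positivity) _)
  rw [lhs_eq, MeasureTheory.integral_integral_swap (f := fun t u => G (t, u)) hGint]
  have inner_eq : ∀ u : ℝ, (∫ t : ℝ, G (t, u)) =
      (Ioi (0:ℝ)).indicator
        (fun u => ((Complex.exp ((b - a) * u) - 1) / (b - a)) *
          (Complex.exp (-(b * u)) * ψ u)) u := by
    intro u
    by_cases hu : u ∈ Ioi (0:ℝ)
    · have hGu : ∀ t : ℝ, G (t, u) =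
          ((Ioo (0:ℝ) u).indicator (fun t => Complex.exp ((b - a) * t)) t) *
            (Complex.exp (-(b * u)) * Ψ u) := by
        intro t
        by_cases ht : t ∈ Ioo (0:ℝ) u
        · rw [hGdef, indicator_of_mem (show (t,u) ∈ D from ⟨ht.1, ht.2⟩), indicator_of_mem ht]
        · rw [hGdef, indicator_of_notMem (show (t,u) ∉ D from fun h => ht ⟨h.1, h.2⟩),
            indicator_of_notMem ht, zero_mul]
      rw [integral_congr_ae (Eventually.of_forall hGu), integral_mul_const,
        integral_indicator measurableSet_Ioo]
      have hint : (∫ t in Ioo (0:ℝ) u, Complex.exp ((b - a) * t)) =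
          (Complex.exp ((b - a) * u) - 1) / (b - a) := by
        rw [← integral_Ioc_eq_integral_Ioo, ← intervalIntegral.integral_of_le (le_of_lt hu),
          integral_exp_mul_complex (sub_ne_zero.2 (Ne.symm hab))]
        norm_num
      rw [hint, indicator_of_mem hu, hΨdef, indicator_of_mem hu]
    · have hGu : ∀ t : ℝ, G (t, u) = 0 := fun t =>
        indicator_of_notMem (fun h => hu (mem_Ioi.2 (lt_trans h.1 h.2))) _
      rw [indicator_of_notMem hu]
      simp [hGu]
  rw [integral_congr_ae (Eventually.of_forall inner_eq), integral_indicator measurableSet_Ioi]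
  have hψm : AEStronglyMeasurable ψ (volume.restrict (Ioi 0)) :=
    hψc.aestronglyMeasurable measurableSet_Ioi
  have hIa : IntegrableOn (fun u : ℝ => Complex.exp (-(a * u)) * ψ u) (Ioi 0) :=
    integrableOn_exp_mul hψm hC ha
  have hIb : IntegrableOn (fun u : ℝ => Complex.exp (-(b * u)) * ψ u) (Ioi 0) :=
    integrableOn_exp_mul hψm hC hb
  have hpt : EqOn (fun u : ℝ => ((Complex.exp ((b - a) * u) - 1) / (b - a)) *
        (Complex.exp (-(b * u)) * ψ u))
      (fun u : ℝ => (a - b)⁻¹ *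
        (Complex.exp (-(b * u)) * ψ u - Complex.exp (-(a * u)) * ψ u)) (Ioi (0:ℝ)) := by
    intro u _
    have hba : (b : ℂ) - a ≠ 0 := sub_ne_zero.2 (Ne.symm hab)
    have hab' : (a : ℂ) - b ≠ 0 := sub_ne_zero.2 hab
    have hex : Complex.exp ((b - a) * u) * Complex.exp (-(b * u)) = Complex.exp (-(a * u)) := by
      rw [← Complex.exp_add]; congr 1; ring
    beta_reduce
    rw [← hex]
    field_simp
    ring
  rw [setIntegral_congr_fun measurableSet_Ioi hpt, integral_const_mul, integral_sub hIb hIa]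

lemma hsym_of_selfAdjoint {A : H →L[ℂ] H} (hA : IsSelfAdjoint A) (x y : H) :
    (⟪A x, y⟫ : ℂ) = ⟪x, A y⟫ := by
  conv_lhs => rw [← hA.adjoint_eq]
  exact ContinuousLinearMap.adjoint_inner_left A y x

lemma hexp_conj (z : ℂ) (s : ℝ) :
    (starRingEnd ℂ) (Complex.exp (-(z * s))) = Complex.exp (-((starRingEnd ℂ) z * s)) := by
  rw [← Complex.exp_conj, map_neg, map_mul, Complex.conj_ofReal]

lemma norm_sq_formula (T : ℝ → H →L[ℂ] H)
    (hcont : ∀ x : H, ContinuousOn (fun t => T t x) (Ioi 0))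
    (hsg : ∀ s t : ℝ, 0 < s → 0 < t → T (s + t) = (T s).comp (T t))
    (hsa : ∀ t : ℝ, 0 < t → IsSelfAdjoint (T t))
    (hcontr : ∀ t : ℝ, 0 < t → ‖T t‖ ≤ 1)
    {lam : ℂ} (hre : 0 < lam.re) (him : lam.im ≠ 0) (f : H)
    {Rf : H} (hRf : Rf = ∫ t in Ioi (0:ℝ), Complex.exp (-(lam * t)) • T t f) :
    (⟪Rf, Rf⟫ : ℂ) = (lam - (starRingEnd ℂ) lam)⁻¹ *
      ((⟪Rf, f⟫ : ℂ) - (starRingEnd ℂ) (⟪Rf, f⟫ : ℂ)) := by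
  have hbound : ∀ t ∈ Ioi (0:ℝ), ‖T t f‖ ≤ ‖f‖ := by
    intro t ht
    calc ‖T t f‖ ≤ ‖T t‖ * ‖f‖ := (T t).le_opNorm f
      _ ≤ 1 * ‖f‖ := mul_le_mul_of_nonneg_right (hcontr t ht) (norm_nonneg f)
      _ = ‖f‖ := one_mul _
  have hIntf : IntegrableOn (fun t : ℝ => Complex.exp (-(lam * t)) • T t f) (Ioi 0) :=
    integrableOn_exp_smul (hcont f) hbound hre
  set ψ : ℝ → ℂ := fun u : ℝ => (⟪f, T u f⟫ : ℂ) with hψdef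
  have hψc : ContinuousOn ψ (Ioi 0) := by
    have := (innerSL ℂ f).continuous.comp_continuousOn (hcont f)
    simpa [hψdef, Function.comp_def] using this
  have hψbd : ∀ u ∈ Ioi (0:ℝ), ‖ψ u‖ ≤ ‖f‖ * ‖f‖ := fun u hu =>
    le_trans (norm_inner_le_norm _ _) (mul_le_mul_of_nonneg_left (hbound u hu) (norm_nonneg f))
  have hψconj : ∀ u ∈ Ioi (0:ℝ), (starRingEnd ℂ) (ψ u) = ψ u := by
    intro u hu
    rw [hψdef]
    beta_reduce
    rw [inner_conj_symm]
    exact hsym_of_selfAdjoint (hsa u hu) f f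
  have hC1 : (⟪Rf, Rf⟫ : ℂ) = ∫ t in Ioi (0:ℝ), Complex.exp (-(lam * t)) * ⟪Rf, T t f⟫ := by
    calc (⟪Rf, Rf⟫ : ℂ)
        = innerSL ℂ Rf (∫ t in Ioi (0:ℝ), Complex.exp (-(lam * t)) • T t f) := by
          rw [innerSL_apply_apply, ← hRf]
      _ = ∫ t in Ioi (0:ℝ), innerSL ℂ Rf (Complex.exp (-(lam * t)) • T t f) :=
          ((innerSL ℂ Rf).integral_comp_comm hIntf).symm
      _ = ∫ t in Ioi (0:ℝ), Complex.exp (-(lam * t)) * ⟪Rf, T t f⟫ := by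
          refine integral_congr_ae (Eventually.of_forall fun t => ?_)
          simp [innerSL_apply_apply, inner_smul_right]
  have hC2 : ∀ t ∈ Ioi (0:ℝ), (⟪Rf, T t f⟫ : ℂ)
      = ∫ s in Ioi (0:ℝ), Complex.exp (-((starRingEnd ℂ) lam * s)) * ψ (s + t) := by
    intro t ht
    have h1 : (⟪T t f, Rf⟫ : ℂ)
        = ∫ s in Ioi (0:ℝ), Complex.exp (-(lam * s)) * ⟪T t f, T s f⟫ := by
      calc (⟪T t f, Rf⟫ : ℂ)
          = innerSL ℂ (T t f) (∫ s in Ioi (0:ℝ), Complex.exp (-(lam * s)) • T s f) := by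
            rw [innerSL_apply_apply, ← hRf]
        _ = ∫ s in Ioi (0:ℝ), innerSL ℂ (T t f) (Complex.exp (-(lam * s)) • T s f) :=
            ((innerSL ℂ (T t f)).integral_comp_comm hIntf).symm
        _ = _ := by
            refine integral_congr_ae (Eventually.of_forall fun s => ?_)
            simp [innerSL_apply_apply, inner_smul_right]
    rw [← inner_conj_symm Rf (T t f), h1, ← integral_conj]
    refine integral_congr_ae ((ae_restrict_iff' measurableSet_Ioi).2
      (Eventually.of_forall fun s hs => ?_))
    beta_reduce
    rw [map_mul, hexp_conj, inner_conj_symm]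
    congr 1
    rw [hsym_of_selfAdjoint (hsa s hs)]
    show (⟪f, T s (T t f)⟫ : ℂ) = ⟪f, T (s + t) f⟫
    rw [hsg s t hs ht]
    rfl
  have hC3 : (⟪Rf, Rf⟫ : ℂ) = ∫ t in Ioi (0:ℝ), Complex.exp (-(lam * t)) *
      ∫ s in Ioi (0:ℝ), Complex.exp (-((starRingEnd ℂ) lam * s)) * ψ (s + t) := by
    rw [hC1]
    refine setIntegral_congr_fun measurableSet_Ioi fun t ht => ?_
    beta_reduce
    rw [hC2 t ht]
  have hb : 0 < ((starRingEnd ℂ) lam).re := by simpa using hre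
  have hab : lam ≠ (starRingEnd ℂ) lam := fun h => him (Complex.conj_eq_iff_im.1 h.symm)
  rw [hC3, double_exp_integral hψc hψbd hre hb hab]
  have hIa : (∫ u in Ioi (0:ℝ), Complex.exp (-(lam * u)) * ψ u)
      = (starRingEnd ℂ) (⟪Rf, f⟫ : ℂ) := by
    have h0 : (⟪f, Rf⟫ : ℂ) = ∫ u in Ioi (0:ℝ), Complex.exp (-(lam * u)) * ψ u := by
      calc (⟪f, Rf⟫ : ℂ)
          = innerSL ℂ f (∫ u in Ioi (0:ℝ), Complex.exp (-(lam * u)) • T u f) := by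
            rw [innerSL_apply_apply, ← hRf]
        _ = ∫ u in Ioi (0:ℝ), innerSL ℂ f (Complex.exp (-(lam * u)) • T u f) :=
            ((innerSL ℂ f).integral_comp_comm hIntf).symm
        _ = _ := by
            refine integral_congr_ae (Eventually.of_forall fun u => ?_)
            simp [innerSL_apply_apply, inner_smul_right, hψdef]
    rw [← h0, inner_conj_symm]
  have hIb : (∫ u in Ioi (0:ℝ), Complex.exp (-((starRingEnd ℂ) lam * u)) * ψ u)
      = (⟪Rf, f⟫ : ℂ) := by
    have h1 : (∫ u in Ioi (0:ℝ), Complex.exp (-((starRingEnd ℂ) lam * u)) * ψ u)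
        = (starRingEnd ℂ) (∫ u in Ioi (0:ℝ), Complex.exp (-(lam * u)) * ψ u) := by
      rw [← integral_conj]
      refine integral_congr_ae ((ae_restrict_iff' measurableSet_Ioi).2
        (Eventually.of_forall fun u hu => ?_))
      beta_reduce
      rw [map_mul, hexp_conj, hψconj u hu]
    rw [h1, hIa, Complex.conj_conj]
  rw [hIb, hIa]

end ResolventAux12
end

theorem weak_resolvent_convergence_at_nonreal_implies_strong
    {H : Type*} [NormedAddCommGroup H] [InnerProductSpace ℂ H] [CompleteSpace H]
    (S : ℕ → ℝ → H →L[ℂ] H) (S' : ℝ → H →L[ℂ] H)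
    (hScont : ∀ n, ∀ x : H, ContinuousOn (fun t => S n t x) (Set.Ioi (0 : ℝ)))
    (hS'cont : ∀ x : H, ContinuousOn (fun t => S' t x) (Set.Ioi (0 : ℝ)))
    (hSsg : ∀ n, ∀ s t : ℝ, 0 < s → 0 < t → S n (s + t) = (S n s).comp (S n t))
    (hS'sg : ∀ s t : ℝ, 0 < s → 0 < t → S' (s + t) = (S' s).comp (S' t))
    (hSsa : ∀ n, ∀ t : ℝ, 0 < t → IsSelfAdjoint (S n t))
    (hS'sa : ∀ t : ℝ, 0 < t → IsSelfAdjoint (S' t))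
    (hScontr : ∀ n, ∀ t : ℝ, 0 < t → ‖S n t‖ ≤ 1)
    (hS'contr : ∀ t : ℝ, 0 < t → ‖S' t‖ ≤ 1)
    (R : ℕ → ℂ → H →L[ℂ] H) (R' : ℂ → H →L[ℂ] H)
    (hR : ∀ n, ∀ lam : ℂ, 0 < lam.re → ∀ f : H,
      R n lam f = ∫ t in Set.Ioi (0 : ℝ), Complex.exp (-(lam * t)) • S n t f)
    (hR' : ∀ lam : ℂ, 0 < lam.re → ∀ f : H,
      R' lam f = ∫ t in Set.Ioi (0 : ℝ), Complex.exp (-(lam * t)) • S' t f)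
    (lam : ℂ) (hlam_re : 0 < lam.re) (hlam_im : lam.im ≠ 0)
    (hWOT : ∀ f g : H,
      Tendsto (fun n => (inner ℂ (R n lam f) g : ℂ)) atTop (nhds (inner ℂ (R' lam f) g))) :
    (∀ f : H, Tendsto (fun n => ‖R n lam f‖) atTop (nhds ‖R' lam f‖)) ∧
    (∀ f : H, Tendsto (fun n => R n lam f) atTop (nhds (R' lam f))) := by
  have hre_eq : ∀ x : H, (inner ℂ x x : ℂ).re = ‖x‖ ^ 2 := by
    intro x
    have := inner_self_eq_norm_sq (𝕜 := ℂ) x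
    simpa using this
  have hnormsq : ∀ f : H, Tendsto (fun n => ‖R n lam f‖ ^ 2) atTop (nhds (‖R' lam f‖ ^ 2)) := by
    intro f
    have key : ∀ n : ℕ, (inner ℂ (R n lam f) (R n lam f) : ℂ)
        = (lam - (starRingEnd ℂ) lam)⁻¹ *
          ((inner ℂ (R n lam f) f : ℂ) - (starRingEnd ℂ) (inner ℂ (R n lam f) f : ℂ)) :=
      fun n => ResolventAux12.norm_sq_formula (S n) (hScont n) (hSsg n) (hSsa n) (hScontr n)
        hlam_re hlam_im f (hR n lam hlam_re f)
    have key' : (inner ℂ (R' lam f) (R' lam f) : ℂ)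
        = (lam - (starRingEnd ℂ) lam)⁻¹ *
          ((inner ℂ (R' lam f) f : ℂ) - (starRingEnd ℂ) (inner ℂ (R' lam f) f : ℂ)) :=
      ResolventAux12.norm_sq_formula S' hS'cont hS'sg hS'sa hS'contr
        hlam_re hlam_im f (hR' lam hlam_re f)
    have hB : Tendsto (fun n => (inner ℂ (R n lam f) f : ℂ)) atTop
        (nhds (inner ℂ (R' lam f) f)) := hWOT f f
    have hBc : Tendsto (fun n => (starRingEnd ℂ) (inner ℂ (R n lam f) f : ℂ)) atTop
        (nhds ((starRingEnd ℂ) (inner ℂ (R' lam f) f : ℂ))) :=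
      (Complex.continuous_conj.tendsto _).comp hB
    have h2 : Tendsto (fun n => (inner ℂ (R n lam f) (R n lam f) : ℂ)) atTop
        (nhds (inner ℂ (R' lam f) (R' lam f))) := by
      simp only [key, key']
      exact (hB.sub hBc).const_mul _
    have h3 := (Complex.continuous_re.tendsto _).comp h2
    simp only [Function.comp_def, hre_eq] at h3
    exact h3
  have hnorm : ∀ f : H, Tendsto (fun n => ‖R n lam f‖) atTop (nhds ‖R' lam f‖) := by
    intro f
    have h := (Real.continuous_sqrt.tendsto _).comp (hnormsq f)
    simp only [Function.comp_def] at h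
    simpa [Real.sqrt_sq] using h
  refine ⟨hnorm, fun f => ?_⟩
  have h5 : Tendsto (fun n => (inner ℂ (R n lam f) (R' lam f) : ℂ).re) atTop
      (nhds ((inner ℂ (R' lam f) (R' lam f) : ℂ).re)) :=
    (Complex.continuous_re.tendsto _).comp (hWOT f (R' lam f))
  have h6 : Tendsto (fun n => ‖R n lam f - R' lam f‖ ^ 2) atTop (nhds 0) := by
    have heq : ∀ n, ‖R n lam f - R' lam f‖ ^ 2
        = ‖R n lam f‖ ^ 2 - 2 * (inner ℂ (R n lam f) (R' lam f) : ℂ).re + ‖R' lam f‖ ^ 2 := by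
      intro n
      have := @norm_sub_sq ℂ _ _ _ _ (R n lam f) (R' lam f)
      simpa using this
    have hfin : ‖R' lam f‖ ^ 2 - 2 * (inner ℂ (R' lam f) (R' lam f) : ℂ).re + ‖R' lam f‖ ^ 2
        = 0 := by
      rw [hre_eq]
      ring
    simp only [heq]
    exact hfin ▸ (((hnormsq f).sub (h5.const_mul 2)).add tendsto_const_nhds)
  have h7 : Tendsto (fun n => ‖R n lam f - R' lam f‖) atTop (nhds 0) := by
    have h := (Real.continuous_sqrt.tendsto _).comp h6
    simp only [Function.comp_def] at h
    simpa [Real.sqrt_sq] using h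
  exact tendsto_iff_norm_sub_tendsto_zero.2 h7
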